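/- The energy-constrained minimum ergotropy E_min(E) := min over density matrices ρ with Tr[ρH]=E of E(ρ) is a convex function of E on the interval [ε_min, ε_max] of attainable mean energies. -/

import Mathlib

open Matrix
open scoped BigOperators ComplexOrder

noncomputable def energy {d : ℕ} (H ρ : Matrix (Fin d) (Fin d) ℂ) : ℝ :=
  (Matrix.trace (ρ * H)).re

noncomputable def ergotropy {d : ℕ} (H ρ : Matrix (Fin d) (Fin d) ℂ) : ℝ :=
  energy H ρ - ⨅ U : Matrix.unitaryGroup (Fin d) ℂ,
    energy H ((U : Matrix (Fin d) (Fin d) ℂ) * ρ * star (U : Matrix (Fin d) (Fin d) ℂ))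

noncomputable def antiErgotropy {d : ℕ} (H ρ : Matrix (Fin d) (Fin d) ℂ) : ℝ :=
  (⨆ U : Matrix.unitaryGroup (Fin d) ℂ,
    energy H ((U : Matrix (Fin d) (Fin d) ℂ) * ρ * star (U : Matrix (Fin d) (Fin d) ℂ))) - energy H ρ

noncomputable def minErg {d : ℕ} (H : Matrix (Fin d) (Fin d) ℂ) (E : ℝ) : ℝ :=
  sInf {x : ℝ | ∃ ρ : Matrix (Fin d) (Fin d) ℂ,
    ρ.PosSemidef ∧ ρ.trace = 1 ∧ energy H ρ = E ∧ ergotropy H ρ = x}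

section Aux

lemma energy_eq_sum' {d : ℕ} (H : Matrix (Fin d) (Fin d) ℂ) (hH : H.IsHermitian)
    (σ : Matrix (Fin d) (Fin d) ℂ) :
    energy H σ = ∑ i, ((star (hH.eigenvectorUnitary : Matrix (Fin d) (Fin d) ℂ) * σ *
      (hH.eigenvectorUnitary : Matrix (Fin d) (Fin d) ℂ)) i i).re * hH.eigenvalues i := by
  set V : Matrix (Fin d) (Fin d) ℂ := (hH.eigenvectorUnitary : Matrix (Fin d) (Fin d) ℂ)
  have h1 : Matrix.trace (σ * H) =
      Matrix.trace ((star V * σ * V) * diagonal (RCLike.ofReal ∘ hH.eigenvalues)) := by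
    conv_lhs => rw [hH.spectral_theorem, Unitary.conjStarAlgAut_apply]
    rw [show σ * (V * diagonal (RCLike.ofReal ∘ hH.eigenvalues) * star V)
        = (σ * V * diagonal (RCLike.ofReal ∘ hH.eigenvalues)) * star V by simp [Matrix.mul_assoc],
      Matrix.trace_mul_comm]
    congr 1
    simp [Matrix.mul_assoc]
  have h2 : Matrix.trace ((star V * σ * V) * diagonal (RCLike.ofReal ∘ hH.eigenvalues))
      = ∑ i, (star V * σ * V) i i * (hH.eigenvalues i : ℂ) := by
    simp [Matrix.trace, Matrix.mul_apply, diagonal, Matrix.diag]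
  rw [energy, h1, h2, Complex.re_sum]
  congr 1; ext i
  simp [Complex.mul_re]

lemma diag_re_nonneg' {d : ℕ} {σ : Matrix (Fin d) (Fin d) ℂ} (hσ : σ.PosSemidef) (i : Fin d) :
    0 ≤ (σ i i).re := by
  have := hσ.dotProduct_mulVec_nonneg (Pi.single i 1)
  have h2 : (0:ℂ) ≤ σ i i := by simpa [dotProduct, Pi.single_apply] using this
  exact (Complex.le_def.mp h2).1

lemma conj_psd' {d : ℕ} {σ : Matrix (Fin d) (Fin d) ℂ} (hσ : σ.PosSemidef)
    (V : Matrix (Fin d) (Fin d) ℂ) : (star V * σ * V).PosSemidef := by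
  simpa [Matrix.star_eq_conjTranspose] using hσ.conjTranspose_mul_mul_same V

lemma conj_trace' {d : ℕ} (σ : Matrix (Fin d) (Fin d) ℂ)
    {V : Matrix (Fin d) (Fin d) ℂ} (hV : V ∈ Matrix.unitaryGroup (Fin d) ℂ) :
    (star V * σ * V).trace = σ.trace := by
  rw [Matrix.trace_mul_comm, ← Matrix.mul_assoc, Matrix.mem_unitaryGroup_iff.mp hV, Matrix.one_mul]

lemma energy_lower' {d : ℕ} [NeZero d] (H : Matrix (Fin d) (Fin d) ℂ) (hH : H.IsHermitian)
    {σ : Matrix (Fin d) (Fin d) ℂ} (hσ : σ.PosSemidef) (ht : σ.trace = 1) :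
    (⨅ i, hH.eigenvalues i) ≤ energy H σ := by
  haveI : Nonempty (Fin d) := Fin.pos_iff_nonempty.mp (Nat.pos_of_ne_zero (NeZero.ne d))
  set V : Matrix (Fin d) (Fin d) ℂ := (hH.eigenvectorUnitary : Matrix (Fin d) (Fin d) ℂ)
  set σ' := star V * σ * V with hσ'def
  have hpsd : σ'.PosSemidef := conj_psd' hσ V
  have htr : σ'.trace = 1 := by rw [hσ'def, conj_trace' σ hH.eigenvectorUnitary.2, ht]
  have hsum : ∑ i, (σ' i i).re = 1 := by
    have : (σ'.trace).re = 1 := by rw [htr]; simp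
    simpa [Matrix.trace, Matrix.diag, Complex.re_sum] using this
  rw [energy_eq_sum' H hH σ]
  calc (⨅ i, hH.eigenvalues i) = ∑ i, (σ' i i).re * (⨅ j, hH.eigenvalues j) := by
        rw [← Finset.sum_mul, hsum, one_mul]
    _ ≤ ∑ i, (σ' i i).re * hH.eigenvalues i := by
        apply Finset.sum_le_sum
        intro i _
        exact mul_le_mul_of_nonneg_left (ciInf_le (Set.Finite.bddBelow (Set.finite_range _)) i)
          (diag_re_nonneg' hpsd i)

lemma mk_state' {d : ℕ} (H : Matrix (Fin d) (Fin d) ℂ) (hH : H.IsHermitian)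
    (p : Fin d → ℝ) (hp : ∀ i, 0 ≤ p i) (hsum : ∑ i, p i = 1) :
    ∃ ρ : Matrix (Fin d) (Fin d) ℂ, ρ.PosSemidef ∧ ρ.trace = 1 ∧
      energy H ρ = ∑ i, p i * hH.eigenvalues i := by
  set V : Matrix (Fin d) (Fin d) ℂ := (hH.eigenvectorUnitary : Matrix (Fin d) (Fin d) ℂ) with hV
  have hV1 : star V * V = 1 := Matrix.mem_unitaryGroup_iff'.mp hH.eigenvectorUnitary.2
  set D : Matrix (Fin d) (Fin d) ℂ := diagonal (fun i => (p i : ℂ)) with hD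
  have hDpsd : D.PosSemidef := Matrix.PosSemidef.diagonal (fun i => by
    simpa using (Complex.zero_le_real.mpr (hp i)))
  refine ⟨V * D * star V, ?_, ?_, ?_⟩
  · simpa [Matrix.star_eq_conjTranspose] using hDpsd.mul_mul_conjTranspose_same V
  · rw [Matrix.trace_mul_comm, ← Matrix.mul_assoc, hV1, Matrix.one_mul]
    simp [hD, Matrix.trace, Matrix.diag, ← Complex.ofReal_sum, hsum]
  · rw [energy_eq_sum' H hH]
    have hconj : star V * (V * D * star V) * V = D := by
      rw [show star V * (V * D * star V) * V = (star V * V) * D * (star V * V) by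
        simp [Matrix.mul_assoc], hV1]
      simp
    rw [hconj]
    simp [hD, diagonal]

set_option linter.unreachableTactic false in
set_option linter.unusedTactic false in
lemma exists_state_energy' {d : ℕ} [NeZero d] (H : Matrix (Fin d) (Fin d) ℂ)
    (hH : H.IsHermitian) {E : ℝ}
    (hE : E ∈ Set.Icc (⨅ i, hH.eigenvalues i) (⨆ i, hH.eigenvalues i)) :
    ∃ ρ : Matrix (Fin d) (Fin d) ℂ, ρ.PosSemidef ∧ ρ.trace = 1 ∧ energy H ρ = E := by
  haveI : Nonempty (Fin d) := Fin.pos_iff_nonempty.mp (Nat.pos_of_ne_zero (NeZero.ne d))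
  obtain ⟨i0, hi0⟩ := Finite.exists_min hH.eigenvalues
  obtain ⟨i1, hi1⟩ := Finite.exists_max hH.eigenvalues
  have hmin : (⨅ i, hH.eigenvalues i) = hH.eigenvalues i0 :=
    le_antisymm (ciInf_le (Set.Finite.bddBelow (Set.finite_range _)) i0) (le_ciInf hi0)
  have hmax : (⨆ i, hH.eigenvalues i) = hH.eigenvalues i1 :=
    le_antisymm (ciSup_le hi1) (le_ciSup (Set.Finite.bddAbove (Set.finite_range _)) i1)
  set a := hH.eigenvalues i0
  set b := hH.eigenvalues i1
  rw [hmin, hmax] at hE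
  by_cases hab : a = b
  · have hEa : E = a := le_antisymm (hab ▸ hE.2) hE.1
    obtain ⟨ρ, h1, h2, h3⟩ := mk_state' H hH (fun i => if i = i0 then 1 else 0)
      (fun i => by positivity) (by simp)
    refine ⟨ρ, h1, h2, ?_⟩
    rw [h3, hEa]
    simp [Finset.sum_ite_eq', a]
  · have hlt : a < b := lt_of_le_of_ne (le_trans hE.1 hE.2) hab
    have hne : i0 ≠ i1 := fun h => hab (by simp only [a, b, h])
    set t := (E - a) / (b - a) with ht
    have ht0 : 0 ≤ t := div_nonneg (by linarith [hE.1]) (by linarith)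
    have ht1 : t ≤ 1 := by
      rw [div_le_one (by linarith)]; linarith [hE.2]
    obtain ⟨ρ, h1, h2, h3⟩ := mk_state' H hH
      (fun i => (1 - t) * (if i = i0 then 1 else 0) + t * (if i = i1 then 1 else 0))
      (fun i => add_nonneg (mul_nonneg (by linarith) (by positivity)) (mul_nonneg ht0 (by positivity)))
      (by rw [Finset.sum_add_distrib]; simp [← Finset.mul_sum, Finset.sum_ite_eq'])
    refine ⟨ρ, h1, h2, ?_⟩
    rw [h3]
    have key : ∑ i, ((1 - t) * (if i = i0 then 1 else 0) + t * (if i = i1 then 1 else 0))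
        * hH.eigenvalues i = (1 - t) * a + t * b := by
      have step : ∀ i ∈ Finset.univ, ((1 - t) * (if i = i0 then 1 else 0)
          + t * (if i = i1 then 1 else 0)) * hH.eigenvalues i
          = (1 - t) * ((if i = i0 then hH.eigenvalues i else 0))
          + t * ((if i = i1 then hH.eigenvalues i else 0)) := by
        intro i _
        by_cases h0 : i = i0 <;> by_cases h1 : i = i1 <;>
          simp [h0, h1, hne, hne.symm] <;> ring
      rw [Finset.sum_congr rfl step, Finset.sum_add_distrib, ← Finset.mul_sum, ← Finset.mul_sum,
        Finset.sum_ite_eq' Finset.univ i0 hH.eigenvalues,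
        Finset.sum_ite_eq' Finset.univ i1 hH.eigenvalues]
      simp only [Finset.mem_univ, if_true]
      rfl
    rw [key, ht]
    have hba : b - a ≠ 0 := by linarith
    field_simp
    ring

lemma energy_lin' {d : ℕ} (H ρ1 ρ2 : Matrix (Fin d) (Fin d) ℂ) (a b : ℝ) :
    energy H ((a:ℂ) • ρ1 + (b:ℂ) • ρ2) = a * energy H ρ1 + b * energy H ρ2 := by
  simp [energy, Matrix.add_mul, Matrix.smul_mul, Matrix.trace_add, Matrix.trace_smul,
    Complex.mul_re]

lemma smul_psd' {d : ℕ} {σ : Matrix (Fin d) (Fin d) ℂ} (hσ : σ.PosSemidef) {a : ℝ} (ha : 0 ≤ a) :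
    ((a : ℂ) • σ).PosSemidef := by
  refine PosSemidef.of_dotProduct_mulVec_nonneg ?_ ?_
  · unfold Matrix.IsHermitian
    rw [conjTranspose_smul, hσ.1]
    simp [Complex.conj_ofReal]
  · intro x
    rw [smul_mulVec, dotProduct_smul, smul_eq_mul]
    exact mul_nonneg (by exact_mod_cast ha) (hσ.dotProduct_mulVec_nonneg x)

lemma unitary_conj_psd_trace' {d : ℕ} {ρ : Matrix (Fin d) (Fin d) ℂ} (hρ : ρ.PosSemidef)
    (htr : ρ.trace = 1) (U : Matrix.unitaryGroup (Fin d) ℂ) :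
    ((U : Matrix (Fin d) (Fin d) ℂ) * ρ * star (U : Matrix (Fin d) (Fin d) ℂ)).PosSemidef ∧
    ((U : Matrix (Fin d) (Fin d) ℂ) * ρ * star (U : Matrix (Fin d) (Fin d) ℂ)).trace = 1 := by
  constructor
  · simpa [Matrix.star_eq_conjTranspose] using
      hρ.mul_mul_conjTranspose_same (U : Matrix (Fin d) (Fin d) ℂ)
  · rw [Matrix.trace_mul_comm, ← Matrix.mul_assoc, Matrix.mem_unitaryGroup_iff'.mp U.2,
      Matrix.one_mul, htr]

lemma passive_bdd' {d : ℕ} [NeZero d] (H : Matrix (Fin d) (Fin d) ℂ) (hH : H.IsHermitian)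
    {ρ : Matrix (Fin d) (Fin d) ℂ} (hρ : ρ.PosSemidef) (htr : ρ.trace = 1) :
    BddBelow (Set.range fun U : Matrix.unitaryGroup (Fin d) ℂ =>
      energy H ((U : Matrix (Fin d) (Fin d) ℂ) * ρ * star (U : Matrix (Fin d) (Fin d) ℂ))) := by
  refine ⟨⨅ i, hH.eigenvalues i, ?_⟩
  rintro x ⟨U, rfl⟩
  obtain ⟨h1, h2⟩ := unitary_conj_psd_trace' hρ htr U
  exact energy_lower' H hH h1 h2

lemma ergotropy_nonneg' {d : ℕ} [NeZero d] (H : Matrix (Fin d) (Fin d) ℂ) (hH : H.IsHermitian)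
    {ρ : Matrix (Fin d) (Fin d) ℂ} (hρ : ρ.PosSemidef) (htr : ρ.trace = 1) :
    0 ≤ ergotropy H ρ := by
  have h := ciInf_le (passive_bdd' H hH hρ htr) (1 : Matrix.unitaryGroup (Fin d) ℂ)
  simp only [ergotropy, sub_nonneg]
  refine le_trans h (le_of_eq ?_)
  simp

lemma ergotropy_mix' {d : ℕ} [NeZero d] (H : Matrix (Fin d) (Fin d) ℂ) (hH : H.IsHermitian)
    {ρ1 ρ2 : Matrix (Fin d) (Fin d) ℂ} (h1 : ρ1.PosSemidef) (ht1 : ρ1.trace = 1)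
    (h2 : ρ2.PosSemidef) (ht2 : ρ2.trace = 1) {a b : ℝ} (ha : 0 ≤ a) (hb : 0 ≤ b)
    (hab : a + b = 1) :
    ergotropy H ((a:ℂ) • ρ1 + (b:ℂ) • ρ2) ≤ a * ergotropy H ρ1 + b * ergotropy H ρ2 := by
  haveI : Nonempty (Fin d) := Fin.pos_iff_nonempty.mp (Nat.pos_of_ne_zero (NeZero.ne d))
  set f1 := fun U : Matrix.unitaryGroup (Fin d) ℂ =>
    energy H ((U : Matrix (Fin d) (Fin d) ℂ) * ρ1 * star (U : Matrix (Fin d) (Fin d) ℂ))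
  set f2 := fun U : Matrix.unitaryGroup (Fin d) ℂ =>
    energy H ((U : Matrix (Fin d) (Fin d) ℂ) * ρ2 * star (U : Matrix (Fin d) (Fin d) ℂ))
  have hbd1 : BddBelow (Set.range f1) := passive_bdd' H hH h1 ht1
  have hbd2 : BddBelow (Set.range f2) := passive_bdd' H hH h2 ht2
  have hinf : a * (⨅ U, f1 U) + b * (⨅ U, f2 U) ≤
      ⨅ U : Matrix.unitaryGroup (Fin d) ℂ,
        energy H ((U : Matrix (Fin d) (Fin d) ℂ) * ((a:ℂ) • ρ1 + (b:ℂ) • ρ2) *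
          star (U : Matrix (Fin d) (Fin d) ℂ)) := by
    apply le_ciInf
    intro U
    have hsplit : (U : Matrix (Fin d) (Fin d) ℂ) * ((a:ℂ) • ρ1 + (b:ℂ) • ρ2) *
        star (U : Matrix (Fin d) (Fin d) ℂ)
        = (a:ℂ) • ((U : Matrix (Fin d) (Fin d) ℂ) * ρ1 * star (U : Matrix (Fin d) (Fin d) ℂ))
        + (b:ℂ) • ((U : Matrix (Fin d) (Fin d) ℂ) * ρ2 * star (U : Matrix (Fin d) (Fin d) ℂ)) := by
      simp [Matrix.mul_add, Matrix.add_mul, Matrix.mul_smul, Matrix.smul_mul]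
    rw [hsplit, energy_lin']
    exact add_le_add (mul_le_mul_of_nonneg_left (ciInf_le hbd1 U) ha)
      (mul_le_mul_of_nonneg_left (ciInf_le hbd2 U) hb)
  have henergy : energy H ((a:ℂ) • ρ1 + (b:ℂ) • ρ2) = a * energy H ρ1 + b * energy H ρ2 :=
    energy_lin' H ρ1 ρ2 a b
  simp only [ergotropy]
  rw [henergy]
  have := hinf
  nlinarith [hinf]

end Aux

/-- The energy-constrained minimum ergotropy is convex in the mean energy. -/
theorem minErg_convexOn {d : ℕ} [NeZero d] (H : Matrix (Fin d) (Fin d) ℂ)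
    (hH : H.IsHermitian) :
    ConvexOn ℝ (Set.Icc (⨅ i, hH.eigenvalues i) (⨆ i, hH.eigenvalues i)) (minErg H) := by
  set S : ℝ → Set ℝ := fun E => {x : ℝ | ∃ ρ : Matrix (Fin d) (Fin d) ℂ,
    ρ.PosSemidef ∧ ρ.trace = 1 ∧ energy H ρ = E ∧ ergotropy H ρ = x} with hS
  have hbdd : ∀ E, BddBelow (S E) := by
    intro E
    exact ⟨0, by rintro x ⟨ρ, hρ, htr, _, rfl⟩; exact ergotropy_nonneg' H hH hρ htr⟩
  have hne : ∀ E ∈ Set.Icc (⨅ i, hH.eigenvalues i) (⨆ i, hH.eigenvalues i), (S E).Nonempty := by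
    intro E hE
    obtain ⟨ρ, h1, h2, h3⟩ := exists_state_energy' H hH hE
    exact ⟨ergotropy H ρ, ρ, h1, h2, h3, rfl⟩
  refine ⟨convex_Icc _ _, ?_⟩
  intro x hx y hy a b ha hb hab
  have hmem : a • x + b • y ∈ Set.Icc (⨅ i, hH.eigenvalues i) (⨆ i, hH.eigenvalues i) :=
    (convex_Icc _ _) hx hy ha hb hab
  apply le_of_forall_pos_le_add
  intro ε hε
  obtain ⟨v1, hv1mem, hv1⟩ := Real.lt_sInf_add_pos (hne x hx) hε
  obtain ⟨v2, hv2mem, hv2⟩ := Real.lt_sInf_add_pos (hne y hy) hε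
  obtain ⟨ρ1, hρ1, htr1, hen1, herg1⟩ := hv1mem
  obtain ⟨ρ2, hρ2, htr2, hen2, herg2⟩ := hv2mem
  set ρ := (a:ℂ) • ρ1 + (b:ℂ) • ρ2 with hρdef
  have hρpsd : ρ.PosSemidef := (smul_psd' hρ1 ha).add (smul_psd' hρ2 hb)
  have hρtr : ρ.trace = 1 := by
    rw [hρdef, Matrix.trace_add, Matrix.trace_smul, Matrix.trace_smul, htr1, htr2]
    simp only [smul_eq_mul, mul_one]
    exact_mod_cast congrArg (Complex.ofReal) hab
  have hρen : energy H ρ = a • x + b • y := by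
    rw [hρdef, energy_lin', hen1, hen2]; simp [smul_eq_mul]
  have hρmem : ergotropy H ρ ∈ S (a • x + b • y) := ⟨ρ, hρpsd, hρtr, hρen, rfl⟩
  have h1 : minErg H (a • x + b • y) ≤ ergotropy H ρ := csInf_le (hbdd _) hρmem
  have h2 : ergotropy H ρ ≤ a * v1 + b * v2 := by
    rw [← herg1, ← herg2]
    exact ergotropy_mix' H hH hρ1 htr1 hρ2 htr2 ha hb hab
  have h3 : a * v1 + b * v2 ≤ a * minErg H x + b * minErg H y + ε := by
    have e1 : a * v1 ≤ a * (minErg H x + ε) := mul_le_mul_of_nonneg_left hv1.le ha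
    have e2 : b * v2 ≤ b * (minErg H y + ε) := mul_le_mul_of_nonneg_left hv2.le hb
    nlinarith
  calc minErg H (a • x + b • y) ≤ ergotropy H ρ := h1
    _ ≤ a * v1 + b * v2 := h2
    _ ≤ a * minErg H x + b * minErg H y + ε := h3
    _ = a • minErg H x + b • minErg H y + ε := by simp [smul_eq_mul]
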